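/- Let μ = (μ₁,μ₂) with μ₁ ≠ μ₂, n = μ₁ + μ₂ odd. Then D⁺(μ) = (r₁ − r₂)^n is μ-symmetric with gist F̊_n(z₁,z₂,z₃) = (((n−1)z₁² − 2n z₂)/(μ₁μ₂))^{(n−3)/2} · (k₁z₁³ + k₂z₁z₂ + k₃z₃), where k₁ = −(n−1)(n−2)/d, k₂ = 3n(n−2)/d, k₃ = −3n²/d, d = μ₁μ₂(μ₁−μ₂); i.e., F̊_n(ē₁,ē₂,ē₃) = (r₁−r₂)^n. -/

import Mathlib

open MvPolynomial

theorem newton2' (σ : Type*) [Fintype σ] (R : Type*) [CommRing R] :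
    2 * esymm σ R 2 = esymm σ R 1 * psum σ R 1 - psum σ R 2 := by
  have h := mul_esymm_eq_sum σ R 2
  simp only [Finset.sum_filter, Finset.Nat.sum_antidiagonal_eq_sum_range_succ_mk,
    Finset.sum_range_succ, Finset.sum_range_zero] at h
  norm_num [esymm_zero] at h
  rw [esymm_one, psum_one]
  linear_combination h

theorem newton3' (σ : Type*) [Fintype σ] (R : Type*) [CommRing R] :
    3 * esymm σ R 3 = psum σ R 3 - esymm σ R 1 * psum σ R 2 + esymm σ R 2 * psum σ R 1 := by
  have h := mul_esymm_eq_sum σ R 3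
  simp only [Finset.sum_filter, Finset.Nat.sum_antidiagonal_eq_sum_range_succ_mk,
    Finset.sum_range_succ, Finset.sum_range_zero] at h
  norm_num [esymm_zero] at h
  rw [esymm_one, psum_one]
  linear_combination h


/-- Canonical specialization for a two-part partition `μ = (μ₁,μ₂)`:
`x₁,…,x_{μ₁} ↦ r₁`, `x_{μ₁+1},…,x_n ↦ r₂`. -/
noncomputable def sigma2 (K : Type*) [Field K] (μ1 μ2 : ℕ) :
    MvPolynomial (Fin (μ1 + μ2)) K →ₐ[K] MvPolynomial (Fin 2) K :=
  MvPolynomial.aeval (fun i : Fin (μ1 + μ2) => if (i : ℕ) < μ1 then X 0 else X 1)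

/-- `ē_k = σ_μ(e_k)` for the two-part partition `μ = (μ₁,μ₂)`. -/
noncomputable def ebar (K : Type*) [Field K] (μ1 μ2 k : ℕ) : MvPolynomial (Fin 2) K :=
  sigma2 K μ1 μ2 (esymm (Fin (μ1 + μ2)) K k)

theorem pbar (K : Type*) [Field K] (μ1 μ2 k : ℕ) :
    sigma2 K μ1 μ2 (psum (Fin (μ1 + μ2)) K k)
      = C (μ1 : K) * X 0 ^ k + C (μ2 : K) * X 1 ^ k := by
  rw [psum, map_sum]
  simp only [map_pow, sigma2, aeval_X]
  rw [Fin.sum_univ_eq_sum_range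
    (fun i => (if i < μ1 then (X 0 : MvPolynomial (Fin 2) K) else X 1) ^ k)]
  rw [Finset.sum_range_add]
  simp [Finset.sum_ite_of_true, Finset.sum_ite_of_false, Nat.lt_irrefl, mul_comm]

/-- For `μ = (μ₁,μ₂)` with `μ₁ ≠ μ₂` and `n = μ₁ + μ₂` odd,
`D⁺(μ) = (r₁ − r₂)^n` is `μ`-symmetric with gist
`F̊_n(z₁,z₂,z₃) = (((n−1)z₁² − 2n z₂)/(μ₁μ₂))^{(n−3)/2} (k₁z₁³ + k₂z₁z₂ + k₃z₃)`:
`F̊_n(ē₁,ē₂,ē₃) = (r₁ − r₂)^n`. -/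
theorem stmt12 {K : Type*} [Field K] [CharZero K] (μ1 μ2 : ℕ) (h1 : 1 ≤ μ1) (h2 : 1 ≤ μ2)
    (hne : μ1 ≠ μ2) (hn : Odd (μ1 + μ2)) :
    (C (((μ1 : K) * μ2)⁻¹) *
          (C (((μ1 + μ2 : ℕ) : K) - 1) * ebar K μ1 μ2 1 ^ 2
            - C (2 * ((μ1 + μ2 : ℕ) : K)) * ebar K μ1 μ2 2)) ^ ((μ1 + μ2 - 3) / 2)
        * (C ((-((((μ1 + μ2 : ℕ) : K) - 1) * (((μ1 + μ2 : ℕ) : K) - 2)))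
              / ((μ1 : K) * μ2 * ((μ1 : K) - μ2))) * ebar K μ1 μ2 1 ^ 3
          + C ((3 * ((μ1 + μ2 : ℕ) : K) * (((μ1 + μ2 : ℕ) : K) - 2))
              / ((μ1 : K) * μ2 * ((μ1 : K) - μ2))) * (ebar K μ1 μ2 1 * ebar K μ1 μ2 2)
          + C ((-(3 * ((μ1 + μ2 : ℕ) : K) ^ 2))
              / ((μ1 : K) * μ2 * ((μ1 : K) - μ2))) * ebar K μ1 μ2 3)
        = ((X 0 : MvPolynomial (Fin 2) K) - X 1) ^ (μ1 + μ2) ∧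
    ∃ Fhat : MvPolynomial (Fin (μ1 + μ2)) K, Fhat.IsSymmetric ∧
      sigma2 K μ1 μ2 Fhat = ((X 0 : MvPolynomial (Fin 2) K) - X 1) ^ (μ1 + μ2) := by
  have ha : (μ1 : K) ≠ 0 := Nat.cast_ne_zero.mpr (by omega)
  have hb : (μ2 : K) ≠ 0 := Nat.cast_ne_zero.mpr (by omega)
  have hab : (μ1 : K) - μ2 ≠ 0 := sub_ne_zero.mpr (fun h => hne (Nat.cast_injective h))
  have hcast : ((μ1 + μ2 : ℕ) : K) = (μ1 : K) + μ2 := by push_cast; ring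
  set A : MvPolynomial (Fin 2) K := X 0 with hA
  set B : MvPolynomial (Fin 2) K := X 1 with hB
  have hE1 : ebar K μ1 μ2 1 = C (μ1 : K) * A + C (μ2 : K) * B := by
    rw [ebar, esymm_one, ← psum_one, pbar, pow_one, pow_one]
  have hE2 : (2 : MvPolynomial (Fin 2) K) * ebar K μ1 μ2 2
      = ebar K μ1 μ2 1 * (C (μ1 : K) * A + C (μ2 : K) * B)
        - (C (μ1 : K) * A ^ 2 + C (μ2 : K) * B ^ 2) := by
    have hEb : ∀ k, sigma2 K μ1 μ2 (esymm (Fin (μ1 + μ2)) K k) = ebar K μ1 μ2 k :=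
      fun _ => rfl
    have h := congrArg (sigma2 K μ1 μ2) (newton2' (Fin (μ1 + μ2)) K)
    simpa only [map_mul, map_sub, map_ofNat, pbar, pow_one, hEb] using h
  have hE3 : (3 : MvPolynomial (Fin 2) K) * ebar K μ1 μ2 3
      = (C (μ1 : K) * A ^ 3 + C (μ2 : K) * B ^ 3)
        - ebar K μ1 μ2 1 * (C (μ1 : K) * A ^ 2 + C (μ2 : K) * B ^ 2)
        + ebar K μ1 μ2 2 * (C (μ1 : K) * A + C (μ2 : K) * B) := by
    have hEb : ∀ k, sigma2 K μ1 μ2 (esymm (Fin (μ1 + μ2)) K k) = ebar K μ1 μ2 k :=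
      fun _ => rfl
    have h := congrArg (sigma2 K μ1 μ2) (newton3' (Fin (μ1 + μ2)) K)
    simpa only [map_mul, map_sub, map_add, map_ofNat, pbar, pow_one, hEb] using h
  have hF1 : C (((μ1 : K) * μ2)⁻¹) *
        (C (((μ1 + μ2 : ℕ) : K) - 1) * ebar K μ1 μ2 1 ^ 2
          - C (2 * ((μ1 + μ2 : ℕ) : K)) * ebar K μ1 μ2 2) = (A - B) ^ 2 := by
    have habne : (μ1 : K) * μ2 ≠ 0 := mul_ne_zero ha hb
    apply mul_left_cancel₀ (show (C ((μ1 : K) * μ2) : MvPolynomial (Fin 2) K) ≠ 0 from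
      fun h => habne (C_injective _ _ (by rw [h, C_0])))
    rw [← mul_assoc, ← C_mul, mul_inv_cancel₀ habne, C_1, one_mul, hcast]
    simp only [map_sub, map_add, map_mul, map_one, map_ofNat]
    linear_combination ((C (μ1:K) + C (μ2:K) - 1) * (ebar K μ1 μ2 1 + (C (μ1:K) * A + C (μ2:K) * B))
        - (C (μ1:K) + C (μ2:K)) * (C (μ1:K) * A + C (μ2:K) * B)) * hE1
      - (C (μ1:K) + C (μ2:K)) * hE2
  have hF2 : C ((-((((μ1 + μ2 : ℕ) : K) - 1) * (((μ1 + μ2 : ℕ) : K) - 2)))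
              / ((μ1 : K) * μ2 * ((μ1 : K) - μ2))) * ebar K μ1 μ2 1 ^ 3
          + C ((3 * ((μ1 + μ2 : ℕ) : K) * (((μ1 + μ2 : ℕ) : K) - 2))
              / ((μ1 : K) * μ2 * ((μ1 : K) - μ2))) * (ebar K μ1 μ2 1 * ebar K μ1 μ2 2)
          + C ((-(3 * ((μ1 + μ2 : ℕ) : K) ^ 2))
              / ((μ1 : K) * μ2 * ((μ1 : K) - μ2))) * ebar K μ1 μ2 3 = (A - B) ^ 3 := by
    have hd : (μ1 : K) * μ2 * ((μ1 : K) - μ2) ≠ 0 := mul_ne_zero (mul_ne_zero ha hb) hab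
    have hc1 : (μ1 : K) * μ2 * ((μ1 : K) - μ2)
        * ((-((((μ1 + μ2 : ℕ) : K) - 1) * (((μ1 + μ2 : ℕ) : K) - 2)))
            / ((μ1 : K) * μ2 * ((μ1 : K) - μ2)))
        = -((((μ1 + μ2 : ℕ) : K) - 1) * (((μ1 + μ2 : ℕ) : K) - 2)) := by
      field_simp
      try ring
    have hc2 : (μ1 : K) * μ2 * ((μ1 : K) - μ2)
        * ((3 * ((μ1 + μ2 : ℕ) : K) * (((μ1 + μ2 : ℕ) : K) - 2))
            / ((μ1 : K) * μ2 * ((μ1 : K) - μ2)))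
        = 3 * ((μ1 + μ2 : ℕ) : K) * (((μ1 + μ2 : ℕ) : K) - 2) := by
      field_simp
      try ring
    have hc3 : (μ1 : K) * μ2 * ((μ1 : K) - μ2)
        * ((-(3 * ((μ1 + μ2 : ℕ) : K) ^ 2)) / ((μ1 : K) * μ2 * ((μ1 : K) - μ2)))
        = -(3 * ((μ1 + μ2 : ℕ) : K) ^ 2) := by
      field_simp
      try ring
    apply mul_left_cancel₀
      (show (C ((μ1 : K) * μ2 * ((μ1 : K) - μ2)) : MvPolynomial (Fin 2) K) ≠ 0 from
      fun h => hd (C_injective _ _ (by rw [h, C_0])))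
    rw [mul_add, mul_add]
    simp only [← mul_assoc, ← C_mul]
    rw [hc1, hc2, hc3, hcast]
    rw [hE1] at hE2 hE3 ⊢
    simp only [map_sub, map_add, map_mul, map_one, map_neg, map_pow, map_ofNat]
    apply mul_left_cancel₀ (show (2 : MvPolynomial (Fin 2) K) ≠ 0 from two_ne_zero)
    linear_combination ((2 * (C (μ1:K) + C (μ2:K)) ^ 2 - 6 * (C (μ1:K) + C (μ2:K)))
        * (C (μ1:K) * A + C (μ2:K) * B)) * hE2
      - (2 * (C (μ1:K) + C (μ2:K)) ^ 2) * hE3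
  have hmain : (C (((μ1 : K) * μ2)⁻¹) *
          (C (((μ1 + μ2 : ℕ) : K) - 1) * ebar K μ1 μ2 1 ^ 2
            - C (2 * ((μ1 + μ2 : ℕ) : K)) * ebar K μ1 μ2 2)) ^ ((μ1 + μ2 - 3) / 2)
        * (C ((-((((μ1 + μ2 : ℕ) : K) - 1) * (((μ1 + μ2 : ℕ) : K) - 2)))
              / ((μ1 : K) * μ2 * ((μ1 : K) - μ2))) * ebar K μ1 μ2 1 ^ 3
          + C ((3 * ((μ1 + μ2 : ℕ) : K) * (((μ1 + μ2 : ℕ) : K) - 2))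
              / ((μ1 : K) * μ2 * ((μ1 : K) - μ2))) * (ebar K μ1 μ2 1 * ebar K μ1 μ2 2)
          + C ((-(3 * ((μ1 + μ2 : ℕ) : K) ^ 2))
              / ((μ1 : K) * μ2 * ((μ1 : K) - μ2))) * ebar K μ1 μ2 3)
        = (A - B) ^ (μ1 + μ2) := by
    obtain ⟨m, hm⟩ := hn
    rw [hF1, hF2, ← pow_mul, ← pow_add]
    congr 1
    omega
  refine ⟨hmain, ?_⟩
  set n := μ1 + μ2 with hn'
  refine ⟨(C (((μ1 : K) * μ2)⁻¹) *
          (C ((n : K) - 1) * esymm (Fin n) K 1 ^ 2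
            - C (2 * (n : K)) * esymm (Fin n) K 2)) ^ ((n - 3) / 2)
        * (C ((-(((n : K) - 1) * ((n : K) - 2)))
              / ((μ1 : K) * μ2 * ((μ1 : K) - μ2))) * esymm (Fin n) K 1 ^ 3
          + C ((3 * (n : K) * ((n : K) - 2))
              / ((μ1 : K) * μ2 * ((μ1 : K) - μ2))) * (esymm (Fin n) K 1 * esymm (Fin n) K 2)
          + C ((-(3 * (n : K) ^ 2))
              / ((μ1 : K) * μ2 * ((μ1 : K) - μ2))) * esymm (Fin n) K 3), ?_, ?_⟩
  · intro e
    simp only [map_mul, map_pow, map_sub, map_add, rename_C, rename_esymm, n]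
  · have hC : ∀ r : K, sigma2 K μ1 μ2 (C r) = C r := fun r => by
      simp [sigma2, algebraMap_eq]
    have hEb : ∀ k, sigma2 K μ1 μ2 (esymm (Fin (μ1 + μ2)) K k) = ebar K μ1 μ2 k :=
      fun _ => rfl
    rw [← hmain]
    simp only [map_mul, map_pow, map_sub, map_add, hC, hEb, n]
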